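/- Let F₀ ∈ ℝⁿ, F₁ an invertible n×n matrix, F₂ an n×n² matrix. Define α = ‖F₁^{-1}‖·‖F₀‖, β = ‖F₁^{-1}‖·‖F₂‖, R = 4αβ. Define vectors ν_i ∈ ℝⁿ by F₁ν₀ + F₀ = 0 and F₁ν_i + F₂ Σ_{j=0}^{i−1} ν_j ⊗ ν_{i−1−j} = 0 for i ≥ 1. Then for all i ≥ 0, ‖ν_i‖ ≤ α R^i. -/

import Mathlib

/-- Spectral (operator 2-) norm of a real matrix. -/
noncomputable def specNorm {m n : Type*} [Fintype m] [Fintype n] [DecidableEq n]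
    (A : Matrix m n ℝ) : ℝ :=
  ‖LinearMap.toContinuousLinearMap (Matrix.toEuclideanLin A)‖

/-- Euclidean (l2) norm of a real vector. -/
noncomputable def vecNorm {ι : Type*} [Fintype ι] (v : ι → ℝ) : ℝ :=
  ‖(WithLp.equiv 2 (ι → ℝ)).symm v‖

/-- Kronecker product of two vectors. -/
def vkron {n : ℕ} (u v : Fin n → ℝ) : Fin n × Fin n → ℝ := fun p => u p.1 * v p.2

lemma vecNorm_nonneg {ι : Type*} [Fintype ι] (v : ι → ℝ) : 0 ≤ vecNorm v :=
  norm_nonneg _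

lemma specNorm_nonneg {m n : Type*} [Fintype m] [Fintype n] [DecidableEq n]
    (A : Matrix m n ℝ) : 0 ≤ specNorm A := norm_nonneg _

lemma vecNorm_mulVec_le {m n : Type*} [Fintype m] [Fintype n] [DecidableEq n]
    (A : Matrix m n ℝ) (v : n → ℝ) :
    vecNorm (A.mulVec v) ≤ specNorm A * vecNorm v := by
  have h := (LinearMap.toContinuousLinearMap (Matrix.toEuclideanLin A)).le_opNorm
    ((WithLp.equiv 2 (n → ℝ)).symm v)
  simpa [vecNorm, specNorm, Matrix.toEuclideanLin_apply_piLp_toLp] using h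

lemma vecNorm_neg {ι : Type*} [Fintype ι] (v : ι → ℝ) : vecNorm (-v) = vecNorm v := by
  have : (WithLp.equiv 2 (ι → ℝ)).symm (-v) = -((WithLp.equiv 2 (ι → ℝ)).symm v) := rfl
  rw [vecNorm, this, norm_neg]; rfl

lemma vecNorm_sum_le {ι κ : Type*} [Fintype ι] (s : Finset κ) (f : κ → ι → ℝ) :
    vecNorm (∑ j ∈ s, f j) ≤ ∑ j ∈ s, vecNorm (f j) := by
  have : (WithLp.equiv 2 (ι → ℝ)).symm (∑ j ∈ s, f j)
      = ∑ j ∈ s, (WithLp.equiv 2 (ι → ℝ)).symm (f j) := WithLp.toLp_sum 2 (ι → ℝ) s f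
  rw [vecNorm, this]
  exact norm_sum_le _ _

lemma vecNorm_vkron {n : ℕ} (u v : Fin n → ℝ) :
    vecNorm (vkron u v) = vecNorm u * vecNorm v := by
  have hu : vecNorm u = Real.sqrt (∑ i, u i ^ 2) := by
    rw [vecNorm, EuclideanSpace.norm_eq]
    congr 1; apply Finset.sum_congr rfl; intro i _
    rw [Real.norm_eq_abs, sq_abs]; rfl
  have hv : vecNorm v = Real.sqrt (∑ i, v i ^ 2) := by
    rw [vecNorm, EuclideanSpace.norm_eq]
    congr 1; apply Finset.sum_congr rfl; intro i _
    rw [Real.norm_eq_abs, sq_abs]; rfl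
  have hk : vecNorm (vkron u v) = Real.sqrt (∑ p : Fin n × Fin n, (u p.1 * v p.2) ^ 2) := by
    rw [vecNorm, EuclideanSpace.norm_eq]
    congr 1; apply Finset.sum_congr rfl; intro p _
    rw [Real.norm_eq_abs, sq_abs]; rfl
  rw [hu, hv, hk, ← Real.sqrt_mul (by positivity)]
  congr 1
  rw [Finset.sum_mul_sum, Fintype.sum_prod_type]
  apply Finset.sum_congr rfl; intro i _
  apply Finset.sum_congr rfl; intro j _
  ring

lemma catalan_le_four_pow (n : ℕ) : catalan n ≤ 4 ^ n := by
  calc catalan n = n.centralBinom / (n + 1) := catalan_eq_centralBinom_div n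
    _ ≤ n.centralBinom := Nat.div_le_self _ _
    _ = (2 * n).choose n := Nat.centralBinom_eq_two_mul_choose n
    _ ≤ (2 * n + 1).choose n := Nat.choose_le_choose n (Nat.le_succ _)
    _ ≤ 4 ^ n := Nat.choose_middle_le_pow n

theorem stmt_5 (n : ℕ) (F₀ : Fin n → ℝ) (F₁ : Matrix (Fin n) (Fin n) ℝ)
    (F₂ : Matrix (Fin n) (Fin n × Fin n) ℝ) (hF₁ : IsUnit F₁)
    (α β R : ℝ)
    (hα : α = specNorm F₁⁻¹ * vecNorm F₀)
    (hβ : β = specNorm F₁⁻¹ * specNorm F₂)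
    (hR : R = 4 * α * β)
    (ν : ℕ → Fin n → ℝ)
    (h0 : F₁.mulVec (ν 0) + F₀ = 0)
    (hrec : ∀ i : ℕ, 1 ≤ i →
      F₁.mulVec (ν i) +
        F₂.mulVec (∑ j ∈ Finset.range i, vkron (ν j) (ν (i - 1 - j))) = 0) :
    ∀ i : ℕ, vecNorm (ν i) ≤ α * R ^ i := by
  have hdet : IsUnit F₁.det := (Matrix.isUnit_iff_isUnit_det F₁).mp hF₁
  have hαnn : 0 ≤ α := hα ▸ mul_nonneg (specNorm_nonneg _) (vecNorm_nonneg _)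
  have hβnn : 0 ≤ β := hβ ▸ mul_nonneg (specNorm_nonneg _) (specNorm_nonneg _)
  -- from F₁ x + y = 0 we get a norm bound
  have hsolve : ∀ (x y : Fin n → ℝ), F₁.mulVec x + y = 0 →
      vecNorm x ≤ specNorm F₁⁻¹ * vecNorm y := by
    intro x y hxy
    have hx : x = -(F₁⁻¹.mulVec y) := by
      have h1 : F₁.mulVec x = -y := by
        have := congrArg (fun z => z - y) hxy
        simpa [add_sub_cancel_right] using this
      have h2 : F₁⁻¹.mulVec (F₁.mulVec x) = x := by
        rw [Matrix.mulVec_mulVec, Matrix.nonsing_inv_mul F₁ hdet, Matrix.one_mulVec]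
      rw [h1] at h2
      rw [← h2, Matrix.mulVec_neg]
    rw [hx, vecNorm_neg]
    exact vecNorm_mulVec_le _ _
  -- the key induction: Catalan bound
  have key : ∀ i : ℕ, vecNorm (ν i) ≤ (catalan i : ℝ) * β ^ i * α ^ (i + 1) := by
    intro i
    induction i using Nat.strong_induction_on with
    | _ i ih =>
      match i with
      | 0 =>
        simpa [hα] using hsolve (ν 0) F₀ h0
      | (k + 1) =>
        have hS := hsolve _ _ (hrec (k + 1) (Nat.le_add_left 1 k))
        have hstep : vecNorm (ν (k + 1)) ≤
            β * vecNorm (∑ j ∈ Finset.range (k + 1), vkron (ν j) (ν (k - j))) := by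
          refine hS.trans ?_
          rw [hβ, mul_assoc]
          refine mul_le_mul_of_nonneg_left ?_ (specNorm_nonneg _)
          have : (k + 1 : ℕ) - 1 = k := rfl
          simpa using vecNorm_mulVec_le F₂
            (∑ j ∈ Finset.range (k + 1), vkron (ν j) (ν (k + 1 - 1 - j)))
        have hsum : vecNorm (∑ j ∈ Finset.range (k + 1), vkron (ν j) (ν (k - j)))
            ≤ ∑ j ∈ Finset.range (k + 1),
              ((catalan j : ℝ) * catalan (k - j)) * β ^ k * α ^ (k + 2) := by
          refine (vecNorm_sum_le _ _).trans ?_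
          apply Finset.sum_le_sum
          intro j hj
          rw [vecNorm_vkron]
          have hjk : j ≤ k := Nat.lt_succ_iff.mp (Finset.mem_range.mp hj)
          have h1 := ih j (Nat.lt_succ_of_le hjk)
          have h2 := ih (k - j) (Nat.lt_succ_of_le (Nat.sub_le k j))
          calc vecNorm (ν j) * vecNorm (ν (k - j))
              ≤ ((catalan j : ℝ) * β ^ j * α ^ (j + 1)) *
                ((catalan (k - j) : ℝ) * β ^ (k - j) * α ^ (k - j + 1)) :=
                mul_le_mul h1 h2 (vecNorm_nonneg _) (by positivity)
            _ = ((catalan j : ℝ) * catalan (k - j)) *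
                (β ^ j * β ^ (k - j)) * (α ^ (j + 1) * α ^ (k - j + 1)) := by ring
            _ = ((catalan j : ℝ) * catalan (k - j)) * β ^ k * α ^ (k + 2) := by
                have e1 : j + (k - j) = k := by omega
                have e2 : (j + 1) + (k - j + 1) = k + 2 := by omega
                rw [← pow_add, ← pow_add, e1, e2]
        have hcat : ∑ j ∈ Finset.range (k + 1),
              ((catalan j : ℝ) * catalan (k - j)) * β ^ k * α ^ (k + 2)
            = (catalan (k + 1) : ℝ) * β ^ k * α ^ (k + 2) := by
          rw [← Finset.sum_mul, ← Finset.sum_mul]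
          congr 2
          rw [catalan_succ]
          push_cast
          rw [Finset.sum_range]
        calc vecNorm (ν (k + 1))
            ≤ β * ((catalan (k + 1) : ℝ) * β ^ k * α ^ (k + 2)) := by
              refine hstep.trans (mul_le_mul_of_nonneg_left ?_ hβnn)
              rw [← hcat]; exact hsum
          _ = (catalan (k + 1) : ℝ) * β ^ (k + 1) * α ^ (k + 2) := by ring
  intro i
  refine (key i).trans ?_
  have hcat4 : (catalan i : ℝ) ≤ (4 : ℝ) ^ i := by
    have := catalan_le_four_pow i
    exact_mod_cast this
  calc (catalan i : ℝ) * β ^ i * α ^ (i + 1)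
      ≤ (4 : ℝ) ^ i * β ^ i * α ^ (i + 1) := by
        apply mul_le_mul_of_nonneg_right (mul_le_mul_of_nonneg_right hcat4 (by positivity))
          (by positivity)
    _ = α * R ^ i := by
        rw [hR, mul_pow, mul_pow, pow_succ]
        ring
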